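/- Nested subgame solving consistency: suppose subgame solving applied after an off-tree action a uses alternative payoffs α(I_1) = CBV^{σ*_2}(I_1) equal to the counterfactual best-response values against an optimal strategy σ*_2, and produces σ'_2 making all margins nonnegative. Then P1's best-response value at each I_1 against σ'_2 after taking a is at most CBV^{σ*_2}(I_1), so the combined strategy's exploitability is at most exp(σ*_2) plus the exploitability contribution of the unchanged blueprint outside the subgame. -/
import Mathlib

/-- **Nested subgame solving consistency.** After an off-tree action `a`, the
subgame `S` has root infosets indexed by `ι` with chance-and-P2 reach weights
`w I ≥ 0`. Subgame solving uses alternative payoffs `α I = CBV^{σ*₂}(I)`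
(counterfactual best-response values against a minimally-exploitable strategy
`σ*₂`) and produces `σ'₂` making every margin `α I - v I` nonnegative, where
`v I` is player 1's best-response value at `I` against `σ'₂` after taking `a`.
Then `v I ≤ CBV^{σ*₂}(I)` for every `I`; and since player 1's best-response
value decomposes over the choice of entering `S` (value `∑ I, w I * v I`) or
playing elsewhere (value `outBlue` against the unchanged blueprint, `outStar`
against `σ*₂`), the combined strategy's exploitability is at most `exp(σ*₂)`
plus the exploitability contribution `max 0 (outBlue - outStar)` of the
unchanged blueprint outside the subgame. -/
theorem nested_subgame_solving_consistency
    {ι : Type*} [Fintype ι]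
    (w : ι → ℝ) (hw : ∀ I, 0 ≤ w I)
    (cbvstar : ι → ℝ)
    (α : ι → ℝ) (hα : ∀ I, α I = cbvstar I)
    (v : ι → ℝ)
    (hmargins : ∀ I, 0 ≤ α I - v I)
    (outBlue outStar gv : ℝ) :
    (∀ I, v I ≤ cbvstar I) ∧
    max outBlue (∑ I, w I * v I) - gv
      ≤ (max outStar (∑ I, w I * cbvstar I) - gv) + max 0 (outBlue - outStar) := by
  have hle : ∀ I, v I ≤ cbvstar I := fun I => by
    have := hmargins I; rw [hα I] at this; linarith
  refine ⟨hle, ?_⟩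
  have hsum : (∑ I, w I * v I) ≤ ∑ I, w I * cbvstar I :=
    Finset.sum_le_sum fun I _ => mul_le_mul_of_nonneg_left (hle I) (hw I)
  have h1 : outBlue ≤ outStar + max 0 (outBlue - outStar) := by
    cases le_total outBlue outStar with
    | inl h => linarith [le_max_left (0:ℝ) (outBlue - outStar)]
    | inr h => rw [max_eq_right (by linarith)]; linarith
  have h2 := le_max_left outStar (∑ I, w I * cbvstar I)
  have h3 := le_max_right outStar (∑ I, w I * cbvstar I)
  have h4 := le_max_left (0:ℝ) (outBlue - outStar)
  have : max outBlue (∑ I, w I * v I) ≤ max outStar (∑ I, w I * cbvstar I) + max 0 (outBlue - outStar) := by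
    apply max_le <;> linarith
  linarith
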